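/- Let (S, μ) be a measure space with μ σ-finite, let p₀, p₁ : S → ℝ be nonnegative measurable probability densities with respect to μ, let π₀, π₁ ≥ 0 with π₀ + π₁ = 1, let P_e = ∫_S min(π₀ p₀(s), π₁ p₁(s)) dμ(s) and ρ = ∫_S √(p₀(s) p₁(s)) dμ(s). Then P_e (1 − P_e) ≥ π₀ π₁ ρ². -/

import Mathlib

open MeasureTheory

/-- With Bayes error `P_e = ∫ min (π₀ p₀) (π₁ p₁) dμ` and Bhattacharyya
coefficient `ρ = ∫ √(p₀ p₁) dμ`, one has `P_e (1 − P_e) ≥ π₀ π₁ ρ²`. -/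
theorem bayes_error_mul_one_sub_ge_priors_mul_bhattacharyya_sq
    {S : Type*} [MeasurableSpace S] (μ : Measure S) [SigmaFinite μ]
    (p₀ p₁ : S → ℝ) (hp₀m : Measurable p₀) (hp₁m : Measurable p₁)
    (hp₀ : ∀ s, 0 ≤ p₀ s) (hp₁ : ∀ s, 0 ≤ p₁ s)
    (hint₀ : ∫ s, p₀ s ∂μ = 1) (hint₁ : ∫ s, p₁ s ∂μ = 1)
    (π₀ π₁ : ℝ) (hπ₀ : 0 ≤ π₀) (hπ₁ : 0 ≤ π₁) (hπ : π₀ + π₁ = 1)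
    (Pe ρ : ℝ) (hPe : Pe = ∫ s, min (π₀ * p₀ s) (π₁ * p₁ s) ∂μ)
    (hρ : ρ = ∫ s, Real.sqrt (p₀ s * p₁ s) ∂μ) :
    π₀ * π₁ * ρ ^ 2 ≤ Pe * (1 - Pe) := by
  -- integrability of the densities
  have hi₀ : Integrable p₀ μ := by
    by_contra h
    rw [integral_undef h] at hint₀; norm_num at hint₀
  have hi₁ : Integrable p₁ μ := by
    by_contra h
    rw [integral_undef h] at hint₁; norm_num at hint₁
  have hi₀' : Integrable (fun s => π₀ * p₀ s) μ := hi₀.const_mul π₀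
  have hi₁' : Integrable (fun s => π₁ * p₁ s) μ := hi₁.const_mul π₁
  set m : S → ℝ := fun s => min (π₀ * p₀ s) (π₁ * p₁ s) with hm
  set M : S → ℝ := fun s => max (π₀ * p₀ s) (π₁ * p₁ s) with hM
  have hmn : ∀ s, 0 ≤ m s := fun s =>
    le_min (mul_nonneg hπ₀ (hp₀ s)) (mul_nonneg hπ₁ (hp₁ s))
  have hMn : ∀ s, 0 ≤ M s := fun s => le_trans (hmn s) (min_le_max)
  have hmm : Measurable m := (hp₀m.const_mul π₀).min (hp₁m.const_mul π₁)
  have hMm : Measurable M := (hp₀m.const_mul π₀).max (hp₁m.const_mul π₁)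
  have him : Integrable m μ := by
    refine hi₀'.mono hmm.aestronglyMeasurable (Filter.Eventually.of_forall fun s => ?_)
    rw [Real.norm_of_nonneg (hmn s), Real.norm_of_nonneg (mul_nonneg hπ₀ (hp₀ s))]
    exact min_le_left _ _
  have hiM : Integrable M μ := by
    refine (hi₀'.add hi₁').mono hMm.aestronglyMeasurable
      (Filter.Eventually.of_forall fun s => ?_)
    simp only [Pi.add_apply]
    rw [Real.norm_of_nonneg (hMn s),
      Real.norm_of_nonneg (add_nonneg (mul_nonneg hπ₀ (hp₀ s)) (mul_nonneg hπ₁ (hp₁ s)))]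
    exact max_le (le_add_of_nonneg_right (mul_nonneg hπ₁ (hp₁ s)))
      (le_add_of_nonneg_left (mul_nonneg hπ₀ (hp₀ s)))
  -- ∫ M = 1 - Pe
  have hsum : ∫ s, M s ∂μ = 1 - Pe := by
    have : ∀ s, M s = (π₀ * p₀ s + π₁ * p₁ s) - m s := by
      intro s; rw [hm, hM]; rcases le_total (π₀ * p₀ s) (π₁ * p₁ s) with h | h <;>
        simp [min_eq_left, max_eq_right, min_eq_right, max_eq_left, h]
    calc ∫ s, M s ∂μ = ∫ s, ((π₀ * p₀ s + π₁ * p₁ s) - m s) ∂μ := by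
          exact integral_congr_ae (Filter.Eventually.of_forall this)
      _ = (∫ s, (π₀ * p₀ s + π₁ * p₁ s) ∂μ) - ∫ s, m s ∂μ :=
          integral_sub (hi₀'.add hi₁') him
      _ = 1 - Pe := by
          rw [integral_add hi₀' hi₁', integral_const_mul, integral_const_mul, hint₀, hint₁,
            hPe]; linarith
  -- Cauchy–Schwarz with f = √m, g = √M
  set f : S → ℝ := fun s => Real.sqrt (m s) with hf
  set g : S → ℝ := fun s => Real.sqrt (M s) with hg
  have hfm : Measurable f := hmm.sqrt
  have hgm : Measurable g := hMm.sqrt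
  have hf2 : ∀ s, f s ^ 2 = m s := fun s => Real.sq_sqrt (hmn s)
  have hg2 : ∀ s, g s ^ 2 = M s := fun s => Real.sq_sqrt (hMn s)
  have hfL2 : MemLp f 2 μ := by
    rw [memLp_two_iff_integrable_sq hfm.aestronglyMeasurable]
    exact him.congr (Filter.Eventually.of_forall fun s => (hf2 s).symm)
  have hgL2 : MemLp g 2 μ := by
    rw [memLp_two_iff_integrable_sq hgm.aestronglyMeasurable]
    exact hiM.congr (Filter.Eventually.of_forall fun s => (hg2 s).symm)
  have hconj : Real.HolderConjugate 2 2 := Real.holderConjugate_iff.mpr ⟨one_lt_two, by norm_num⟩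
  have hCS := integral_mul_le_Lp_mul_Lq_of_nonneg hconj
    (Filter.Eventually.of_forall fun s => Real.sqrt_nonneg _)
    (Filter.Eventually.of_forall fun s => Real.sqrt_nonneg _)
    (by simpa using hfL2) (by simpa using hgL2)
  -- rewrite the three integrals
  have hfg : ∀ s, f s * g s = Real.sqrt (π₀ * π₁) * Real.sqrt (p₀ s * p₁ s) := by
    intro s
    rw [hf, hg, ← Real.sqrt_mul (hmn s), ← Real.sqrt_mul (mul_nonneg hπ₀ hπ₁)]
    congr 1
    rw [hm, hM, min_mul_max]; ring
  have hint_fg : ∫ s, f s * g s ∂μ = Real.sqrt (π₀ * π₁) * ρ := by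
    rw [hρ]
    calc ∫ s, f s * g s ∂μ
        = ∫ s, Real.sqrt (π₀ * π₁) * Real.sqrt (p₀ s * p₁ s) ∂μ :=
          integral_congr_ae (Filter.Eventually.of_forall hfg)
      _ = _ := integral_const_mul _ _
  have hintf2 : ∫ s, f s ^ (2:ℝ) ∂μ = Pe := by
    rw [hPe]
    refine integral_congr_ae (Filter.Eventually.of_forall fun s => ?_)
    show f s ^ (2:ℝ) = m s
    rw [show (2:ℝ) = ((2:ℕ):ℝ) by norm_num, Real.rpow_natCast]
    exact hf2 s
  have hintg2 : ∫ s, g s ^ (2:ℝ) ∂μ = 1 - Pe := by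
    rw [← hsum]
    refine integral_congr_ae (Filter.Eventually.of_forall fun s => ?_)
    show g s ^ (2:ℝ) = M s
    rw [show (2:ℝ) = ((2:ℕ):ℝ) by norm_num, Real.rpow_natCast]
    exact hg2 s
  rw [hint_fg, hintf2, hintg2] at hCS
  have hρn : 0 ≤ ρ := by
    rw [hρ]; exact integral_nonneg fun s => Real.sqrt_nonneg _
  have hPen : 0 ≤ Pe := by
    rw [hPe]; exact integral_nonneg hmn
  have h1Pen : 0 ≤ 1 - Pe := by
    rw [← hsum]; exact integral_nonneg hMn
  have hLHSn : 0 ≤ Real.sqrt (π₀ * π₁) * ρ := mul_nonneg (Real.sqrt_nonneg _) hρn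
  have := mul_le_mul hCS hCS hLHSn
    (mul_nonneg (Real.rpow_nonneg hPen _) (Real.rpow_nonneg h1Pen _))
  calc π₀ * π₁ * ρ ^ 2
      = (Real.sqrt (π₀ * π₁) * ρ) * (Real.sqrt (π₀ * π₁) * ρ) := by
        rw [show (Real.sqrt (π₀ * π₁) * ρ) * (Real.sqrt (π₀ * π₁) * ρ)
            = Real.sqrt (π₀ * π₁) * Real.sqrt (π₀ * π₁) * (ρ * ρ) by ring,
          Real.mul_self_sqrt (mul_nonneg hπ₀ hπ₁)]; ring
    _ ≤ (Pe ^ (1/2:ℝ) * (1 - Pe) ^ (1/2:ℝ)) * (Pe ^ (1/2:ℝ) * (1 - Pe) ^ (1/2:ℝ)) := this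
    _ = Pe * (1 - Pe) := by
        rw [show (Pe ^ (1/2:ℝ) * (1 - Pe) ^ (1/2:ℝ)) * (Pe ^ (1/2:ℝ) * (1 - Pe) ^ (1/2:ℝ))
            = (Pe ^ (1/2:ℝ) * Pe ^ (1/2:ℝ)) * ((1 - Pe) ^ (1/2:ℝ) * (1 - Pe) ^ (1/2:ℝ)) by ring,
          ← Real.rpow_add' hPen (by norm_num), ← Real.rpow_add' h1Pen (by norm_num)]
        norm_num
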